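/- Let φ : E₁ → E₂ be a homomorphism of meet-semilattices. Then the induced map φ̂ : Ê₁ → Ê₂, where φ̂(χ)(f) = true iff there exists x ∈ E₁ with χ(x) = true and φ(x) ≤ f, is continuous if and only if φ is locally coherent. -/

import Mathlib

/-- A semi-character of a meet-semilattice. -/
structure SemiCharInf (E : Type*) [SemilatticeInf E] where
  toFun : E → Bool
  map_inf' : ∀ e f : E, toFun (e ⊓ f) = (toFun e && toFun f)
  exists_true : ∃ e : E, toFun e = true

/-- The space `Ê` of semi-characters, with the subspace topology from `Bool^E`. -/
instance {E : Type*} [SemilatticeInf E] : TopologicalSpace (SemiCharInf E) :=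
  TopologicalSpace.induced (fun χ => χ.toFun) Pi.topologicalSpace

/-- A finitely generated downset. -/
def FinGenDownset {P : Type*} [Preorder P] (X : Set P) : Prop :=
  ∃ A : Finset P, X = {y : P | ∃ a ∈ A, y ≤ a}

/-- A downset of a poset. -/
def IsDownset {P : Type*} [Preorder P] (X : Set P) : Prop :=
  ∀ ⦃x y : P⦄, y ≤ x → x ∈ X → y ∈ X

/-- Local coherence of a semilattice homomorphism. -/
def LocallyCoherent {E₁ E₂ : Type*} [SemilatticeInf E₁] [SemilatticeInf E₂]
    (φ : E₁ → E₂) : Prop :=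
  ∀ x : E₁, ∃ X : Set E₁, IsDownset X ∧ x ∈ X ∧
    ∀ e : E₂, FinGenDownset {y : E₁ | y ∈ X ∧ φ y ≤ e}

open scoped Classical in
noncomputable def prinChar {E : Type*} [SemilatticeInf E] (w : E) : SemiCharInf E where
  toFun z := if w ≤ z then true else false
  map_inf' e f := by
    by_cases he : w ≤ e <;> by_cases hf : w ≤ f <;>
      simp [he, hf, le_inf_iff]
  exists_true := ⟨w, by simp⟩


lemma SemiCharInf.mono {E : Type*} [SemilatticeInf E] (χ : SemiCharInf E) {a b : E}
    (h : a ≤ b) (ha : χ.toFun a = true) : χ.toFun b = true := by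
  have h2 := χ.map_inf' a b
  rw [inf_eq_left.mpr h, ha] at h2
  simpa using h2.symm

theorem stmt9 {E₁ E₂ : Type*} [SemilatticeInf E₁] [SemilatticeInf E₂]
    (φ : E₁ → E₂) (hφ : ∀ x y : E₁, φ (x ⊓ y) = φ x ⊓ φ y)
    (H : SemiCharInf E₁ → SemiCharInf E₂)
    (hH : ∀ (χ : SemiCharInf E₁) (f : E₂),
      (H χ).toFun f = true ↔ ∃ x : E₁, χ.toFun x = true ∧ φ x ≤ f) :
    Continuous H ↔ LocallyCoherent φ := by
  classical
  have hmono : ∀ {a b : E₁}, a ≤ b → φ a ≤ φ b := by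
    intro a b hab
    have : φ a = φ a ⊓ φ b := by rw [← hφ, inf_eq_left.mpr hab]
    rw [this]; exact inf_le_right
  constructor
  · -- Continuity implies local coherence
    intro hc x
    refine ⟨{y | y ≤ x}, fun a b hba ha => hba.trans ha, le_refl x, ?_⟩
    intro e
    by_contra hD
    simp only [Set.mem_setOf_eq] at hD
    -- selection of escaping elements
    have hsel : ∀ A : Finset E₁, ∃ z, (z ≤ x ∧ φ z ≤ e) ∧
        ∀ a ∈ A, (a ≤ x ∧ φ a ≤ e) → ¬ z ≤ a := by
      intro A
      by_contra hcon
      push_neg at hcon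
      apply hD
      refine ⟨A.filter (fun a => a ≤ x ∧ φ a ≤ e), ?_⟩
      ext y
      simp only [Set.mem_setOf_eq, Finset.mem_filter]
      constructor
      · rintro ⟨hy1, hy2⟩
        obtain ⟨a, haA, haD, hya⟩ := hcon y ⟨hy1, hy2⟩
        exact ⟨a, ⟨haA, haD⟩, hya⟩
      · rintro ⟨a, ⟨haA, ha1, ha2⟩, hya⟩
        exact ⟨hya.trans ha1, (hmono hya).trans ha2⟩
    choose y hy1 hy2 using hsel
    -- ultrafilter construction
    let 𝒰 : Ultrafilter (Finset E₁) := Ultrafilter.of Filter.atTop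
    have h𝒰 : ∀ s ∈ (Filter.atTop : Filter (Finset E₁)), s ∈ 𝒰 :=
      fun s hs => Ultrafilter.of_le Filter.atTop hs
    let χ₀ : SemiCharInf E₁ :=
      { toFun := fun z => if {A | y A ≤ z} ∈ 𝒰 then true else false
        map_inf' := by
          intro a b
          have hset : {A | y A ≤ a ⊓ b} = {A | y A ≤ a} ∩ {A | y A ≤ b} := by
            ext A; simp [le_inf_iff]
          have hiff : {A | y A ≤ a ⊓ b} ∈ 𝒰 ↔
              ({A | y A ≤ a} ∈ 𝒰 ∧ {A | y A ≤ b} ∈ 𝒰) := by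
            rw [hset, ← Ultrafilter.mem_coe, Filter.inter_mem_iff]
            simp
          show (if {A | y A ≤ a ⊓ b} ∈ 𝒰 then true else false) =
            ((if {A | y A ≤ a} ∈ 𝒰 then true else false) &&
              (if {A | y A ≤ b} ∈ 𝒰 then true else false))
          rw [if_congr hiff rfl rfl]
          by_cases ha : {A | y A ≤ a} ∈ 𝒰 <;> by_cases hb : {A | y A ≤ b} ∈ 𝒰 <;>
            simp [ha, hb]
        exists_true := by
          refine ⟨x, ?_⟩
          have huniv : {A | y A ≤ x} = Set.univ := by
            ext A; simp [(hy1 A).1]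
          show (if {A | y A ≤ x} ∈ 𝒰 then true else false) = true
          rw [if_pos]
          rw [huniv]
          exact Filter.univ_mem }
    -- H χ₀ is false at e
    have hfalse : (H χ₀).toFun e = false := by
      rw [Bool.eq_false_iff]
      intro htrue
      obtain ⟨z, hz1, hz2⟩ := (hH χ₀ e).1 htrue
      have mem1 : {A | y A ≤ z} ∈ 𝒰 := by
        by_contra hm
        simp only [χ₀, hm, if_false] at hz1
        exact Bool.noConfusion hz1
      have mem2 : {A : Finset E₁ | z ⊓ x ∈ A} ∈ 𝒰 := by
        apply h𝒰
        refine Filter.mem_of_superset (Filter.Ici_mem_atTop ({z ⊓ x} : Finset E₁)) ?_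
        intro A hA
        exact Finset.singleton_subset_iff.mp hA
      obtain ⟨A, hA1, hA2⟩ := Ultrafilter.nonempty_of_mem (Filter.inter_mem mem1 mem2)
      have hzxD : z ⊓ x ≤ x ∧ φ (z ⊓ x) ≤ e :=
        ⟨inf_le_right, by rw [hφ]; exact inf_le_left.trans hz2⟩
      exact hy2 A (z ⊓ x) hA2 hzxD (le_inf hA1 (hy1 A).1)
    -- use continuity to get a finite support
    have hopen : IsOpen {χ : SemiCharInf E₁ | (H χ).toFun e = false} := by
      have hev : Continuous (fun ψ : SemiCharInf E₂ => ψ.toFun e) :=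
        (continuous_apply e).comp continuous_induced_dom
      have := ((hev.comp hc).isOpen_preimage {false} (isOpen_discrete _))
      convert this using 1
      rfl
    rw [isOpen_induced_iff] at hopen
    obtain ⟨V, hV, hVeq⟩ := hopen
    have hχ₀V : χ₀.toFun ∈ V := by
      have : χ₀ ∈ {χ : SemiCharInf E₁ | (H χ).toFun e = false} := hfalse
      rw [← hVeq] at this; exact this
    rw [isOpen_pi_iff] at hV
    obtain ⟨I, u, hu, hsub⟩ := hV χ₀.toFun hχ₀V
    -- find a finset A where prinChar (y A) agrees with χ₀ on I
    have hQ : ∀ s : E₁, {A | (prinChar (y A)).toFun s = χ₀.toFun s} ∈ 𝒰 := by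
      intro s
      by_cases hm : {A | y A ≤ s} ∈ 𝒰
      · refine Filter.mem_of_superset hm ?_
        intro A (hA : y A ≤ s)
        show (prinChar (y A)).toFun s = χ₀.toFun s
        simp [prinChar, χ₀, hA, hm]
      · refine Filter.mem_of_superset ((Ultrafilter.compl_mem_iff_notMem.2 hm)) ?_
        intro A hA
        simp only [Set.mem_compl_iff, Set.mem_setOf_eq] at hA
        show (prinChar (y A)).toFun s = χ₀.toFun s
        simp [prinChar, χ₀, hA, hm]
    have hQI : (⋂ s ∈ (I : Set E₁), {A | (prinChar (y A)).toFun s = χ₀.toFun s}) ∈ 𝒰 :=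
      (Filter.biInter_mem I.finite_toSet).2 (fun s _ => hQ s)
    obtain ⟨A, hA⟩ := Ultrafilter.nonempty_of_mem hQI
    simp only [Set.mem_iInter, Set.mem_setOf_eq] at hA
    have hmemV : (prinChar (y A)).toFun ∈ V := by
      apply hsub
      intro s hs
      rw [hA s hs]
      exact (hu s hs).2
    have : prinChar (y A) ∈ {χ : SemiCharInf E₁ | (H χ).toFun e = false} := by
      rw [← hVeq]; exact hmemV
    have htrue : (H (prinChar (y A))).toFun e = true :=
      (hH _ e).2 ⟨y A, by simp [prinChar], (hy1 A).2⟩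
    have h2 : (H (prinChar (y A))).toFun e = false := this
    rw [htrue] at h2
    exact Bool.noConfusion h2
  · -- Local coherence implies continuity
    intro hLC
    -- key pointwise finite-support property
    have key : ∀ (f : E₂) (χ₀ : SemiCharInf E₁), ∃ S : Finset E₁,
        ∀ χ' : SemiCharInf E₁, (∀ s ∈ S, χ'.toFun s = χ₀.toFun s) →
          (H χ').toFun f = (H χ₀).toFun f := by
      intro f χ₀
      obtain ⟨x, hx⟩ := χ₀.exists_true
      obtain ⟨X, hXdown, hxX, hXfg⟩ := hLC x
      obtain ⟨A, hA⟩ := hXfg f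
      refine ⟨insert x A, ?_⟩
      have sub : ∀ χ : SemiCharInf E₁, χ.toFun x = true →
          ((H χ).toFun f = true ↔ ∃ a ∈ A, χ.toFun a = true) := by
        intro χ hχx
        rw [hH]
        constructor
        · rintro ⟨z, hz1, hz2⟩
          have hwX : z ⊓ x ∈ X := hXdown inf_le_right hxX
          have hwf : φ (z ⊓ x) ≤ f := by rw [hφ]; exact inf_le_left.trans hz2
          have : z ⊓ x ∈ {y : E₁ | y ∈ X ∧ φ y ≤ f} := ⟨hwX, hwf⟩
          rw [hA] at this
          obtain ⟨a, haA, hwa⟩ := this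
          have hχw : χ.toFun (z ⊓ x) = true := by
            rw [χ.map_inf' z x, hz1, hχx]; rfl
          exact ⟨a, haA, χ.mono hwa hχw⟩
        · rintro ⟨a, haA, hχa⟩
          have : a ∈ {y : E₁ | y ∈ X ∧ φ y ≤ f} := by
            rw [hA]; exact ⟨a, haA, le_refl a⟩
          exact ⟨a, hχa, this.2⟩
      intro χ' hagree
      have hx' : χ'.toFun x = true := by
        rw [hagree x (Finset.mem_insert_self x A)]; exact hx
      have e1 := sub χ₀ hx
      have e2 := sub χ' hx'
      have hiff2 : (H χ').toFun f = true ↔ (H χ₀).toFun f = true := by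
        rw [e1, e2]
        constructor
        · rintro ⟨a, haA, ha⟩
          exact ⟨a, haA, by rw [← hagree a (Finset.mem_insert_of_mem haA)]; exact ha⟩
        · rintro ⟨a, haA, ha⟩
          exact ⟨a, haA, by rw [hagree a (Finset.mem_insert_of_mem haA)]; exact ha⟩
      by_cases hb : (H χ₀).toFun f = true
      · rw [hb]; exact hiff2.2 hb
      · have hb' : (H χ₀).toFun f = false := Bool.eq_false_iff.mpr hb
        rw [hb', Bool.eq_false_iff]
        intro ht; exact hb (hiff2.1 ht)
    -- assemble continuity
    apply continuous_induced_rng.mpr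
    apply continuous_pi
    intro f
    rw [continuous_def]
    intro s _
    rw [isOpen_iff_forall_mem_open]
    intro χ₀ hχ₀
    obtain ⟨S, hS⟩ := key f χ₀
    refine ⟨{χ' : SemiCharInf E₁ | ∀ t ∈ S, χ'.toFun t = χ₀.toFun t}, ?_, ?_, ?_⟩
    · intro χ' hχ'
      have : (H χ').toFun f = (H χ₀).toFun f := hS χ' hχ'
      simpa [Set.mem_preimage, this] using hχ₀
    · rw [isOpen_induced_iff]
      refine ⟨(S : Set E₁).pi (fun t => {χ₀.toFun t}), isOpen_set_pi S.finite_toSet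
        (fun _ _ => isOpen_discrete _), ?_⟩
      ext χ'
      simp [Set.mem_pi]
    · intro t _; rfl
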